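/- For any class KL function β : ℝ≥0 × ℝ≥0 → ℝ≥0, there exists a family of maps {T_r}_{r>0} such that: (i) for each fixed r > 0, T_r : (0,∞) → (0,∞) is strictly decreasing and surjective; (ii) for each fixed ε > 0, r ↦ T_r(ε) is strictly increasing and T_r(ε) → ∞ as r → ∞; (iii) (r, ε) ↦ T_r(ε) is jointly continuous; and (iv) β(s, t) ≤ ε whenever s ≤ r and t ≥ T_r(ε). -/

import Mathlib

open MeasureTheory Set Filter

noncomputable section

/-- Class `K` function: continuous, strictly increasing, zero at zero (on `[0,∞)`). -/
def ClassK (f : ℝ → ℝ) : Prop :=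
  ContinuousOn f (Set.Ici 0) ∧ StrictMonoOn f (Set.Ici 0) ∧ f 0 = 0 ∧
    ∀ s, 0 ≤ s → 0 ≤ f s

/-- Class `K∞` function: class `K` and unbounded. -/
def ClassKinf (f : ℝ → ℝ) : Prop :=
  ClassK f ∧ ∀ M : ℝ, ∃ s, 0 ≤ s ∧ M < f s

/-- Class `L` function: continuous, strictly decreasing, positive, tending to `0` at `∞`. -/
def ClassL (f : ℝ → ℝ) : Prop :=
  ContinuousOn f (Set.Ici 0) ∧ StrictAntiOn f (Set.Ici 0) ∧
    (∀ s, 0 ≤ s → 0 < f s) ∧ Filter.Tendsto f Filter.atTop (nhds 0)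

/-- Class `KL` function. -/
def ClassKL (β : ℝ → ℝ → ℝ) : Prop :=
  (∀ t, 0 ≤ t → ClassK (fun s => β s t)) ∧
  ∀ s, 0 ≤ s → ContinuousOn (β s) (Set.Ici 0) ∧ AntitoneOn (β s) (Set.Ici 0) ∧
    Filter.Tendsto (β s) Filter.atTop (nhds 0)

/-- Positive definite function on `[0,∞)`. -/
def PosDef (κ : ℝ → ℝ) : Prop := κ 0 = 0 ∧ ∀ s, 0 < s → 0 < κ s

namespace Stmt9Aux

variable (β : ℝ → ℝ → ℝ)

/-- The set of times after which `β (max x 1) ·` stays below `(max x 1)⁻¹`. -/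
def gset (x : ℝ) : Set ℝ := {t | 0 ≤ t ∧ β (max x 1) t ≤ (max x 1)⁻¹}

def gfun (x : ℝ) : ℝ := sInf (gset β x)

def hfun (x : ℝ) : ℝ := gfun β x * (β (max x 1) 0 + 1)

def Kfun (x : ℝ) : ℝ :=
  (∫ u in (0:ℝ)..(x + 1), hfun β u) - ∫ u in (0:ℝ)..x, hfun β u

variable {β}

lemma gset_nonempty (hβ : ClassKL β) (x : ℝ) : (gset β x).Nonempty := by
  have hR : (0:ℝ) ≤ max x 1 := le_trans zero_le_one (le_max_right x 1)
  have hRpos : (0:ℝ) < max x 1 := lt_of_lt_of_le zero_lt_one (le_max_right x 1)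
  have htend := (hβ.2 (max x 1) hR).2.2
  have hev : ∀ᶠ t in atTop, β (max x 1) t < (max x 1)⁻¹ :=
    htend.eventually_lt_const (by positivity)
  obtain ⟨t, ht, ht0⟩ := (hev.and (eventually_ge_atTop (0:ℝ))).exists
  exact ⟨t, ht0, ht.le⟩

lemma gset_bddBelow (x : ℝ) : BddBelow (gset β x) := ⟨0, fun t ht => ht.1⟩

lemma gset_closed (hβ : ClassKL β) (x : ℝ) : IsClosed (gset β x) := by
  have hR : (0:ℝ) ≤ max x 1 := le_trans zero_le_one (le_max_right x 1)
  have hc := (hβ.2 (max x 1) hR).1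
  have : gset β x = Set.Ici 0 ∩ (β (max x 1)) ⁻¹' (Set.Iic (max x 1)⁻¹) := by
    ext t; simp [gset, and_comm]
  rw [this]
  exact hc.preimage_isClosed_of_isClosed isClosed_Ici isClosed_Iic

lemma gfun_mem (hβ : ClassKL β) (x : ℝ) : gfun β x ∈ gset β x :=
  (gset_closed hβ x).csInf_mem (gset_nonempty hβ x) (gset_bddBelow x)

lemma gfun_nonneg (hβ : ClassKL β) (x : ℝ) : 0 ≤ gfun β x := (gfun_mem hβ x).1

lemma gfun_mono (hβ : ClassKL β) : Monotone (gfun β) := by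
  intro x y hxy
  apply csInf_le_csInf (gset_bddBelow x) (gset_nonempty hβ y)
  intro t ht
  have hRx : (0:ℝ) ≤ max x 1 := le_trans zero_le_one (le_max_right x 1)
  have hRxpos : (0:ℝ) < max x 1 := lt_of_lt_of_le zero_lt_one (le_max_right x 1)
  have hRy : (0:ℝ) ≤ max y 1 := le_trans zero_le_one (le_max_right y 1)
  have hRle : max x 1 ≤ max y 1 := max_le_max hxy le_rfl
  refine ⟨ht.1, ?_⟩
  have h1 : β (max x 1) t ≤ β (max y 1) t :=
    (hβ.1 t ht.1).2.1.monotoneOn hRx hRy hRle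
  have h2 : (max y 1)⁻¹ ≤ (max x 1)⁻¹ := by gcongr
  exact h1.trans (ht.2.trans h2)

lemma hfun_nonneg (hβ : ClassKL β) (x : ℝ) : 0 ≤ hfun β x := by
  have hR : (0:ℝ) ≤ max x 1 := le_trans zero_le_one (le_max_right x 1)
  have hb : 0 ≤ β (max x 1) 0 := (hβ.1 0 le_rfl).2.2.2 (max x 1) hR
  have := gfun_nonneg hβ x
  unfold hfun
  nlinarith

lemma hfun_mono (hβ : ClassKL β) : Monotone (hfun β) := by
  intro x y hxy
  have hRx : (0:ℝ) ≤ max x 1 := le_trans zero_le_one (le_max_right x 1)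
  have hRy : (0:ℝ) ≤ max y 1 := le_trans zero_le_one (le_max_right y 1)
  have hRle : max x 1 ≤ max y 1 := max_le_max hxy le_rfl
  have hb : β (max x 1) 0 ≤ β (max y 1) 0 :=
    (hβ.1 0 le_rfl).2.1.monotoneOn hRx hRy hRle
  have hbx : 0 ≤ β (max x 1) 0 := (hβ.1 0 le_rfl).2.2.2 (max x 1) hRx
  exact mul_le_mul (gfun_mono hβ hxy) (by linarith) (by linarith) (gfun_nonneg hβ y)

lemma hfun_intble (hβ : ClassKL β) (a b : ℝ) :
    IntervalIntegrable (hfun β) volume a b :=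
  (hfun_mono hβ).intervalIntegrable

lemma Kfun_eq (hβ : ClassKL β) (x : ℝ) :
    Kfun β x = ∫ u in x..(x + 1), hfun β u := by
  have h := intervalIntegral.integral_add_adjacent_intervals
    (hfun_intble hβ 0 x) (hfun_intble hβ x (x + 1))
  unfold Kfun
  linarith

lemma Kfun_continuous (hβ : ClassKL β) : Continuous (Kfun β) := by
  have h := intervalIntegral.continuous_primitive
    (fun a b => hfun_intble hβ a b) (0 : ℝ)
  exact (h.comp (continuous_id.add continuous_const)).sub h

lemma Kfun_ge (hβ : ClassKL β) (x : ℝ) : hfun β x ≤ Kfun β x := by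
  rw [Kfun_eq hβ]
  have h := intervalIntegral.integral_mono_on (by linarith : x ≤ x + 1)
    (intervalIntegrable_const (c := hfun β x)) (hfun_intble hβ x (x + 1))
    (fun u hu => hfun_mono hβ hu.1)
  simpa using h

lemma Kfun_nonneg (hβ : ClassKL β) (x : ℝ) : 0 ≤ Kfun β x :=
  (hfun_nonneg hβ x).trans (Kfun_ge hβ x)

lemma Kfun_mono (hβ : ClassKL β) : Monotone (Kfun β) := by
  intro x y hxy
  rw [Kfun_eq hβ, Kfun_eq hβ]
  have hcomp : (∫ u in x..(x + 1), hfun β (u + (y - x)))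
      = ∫ u in y..(y + 1), hfun β u := by
    rw [intervalIntegral.integral_comp_add_right]
    ring_nf
  rw [← hcomp]
  exact intervalIntegral.integral_mono_on (by linarith)
    (hfun_intble hβ x (x + 1))
    (((hfun_mono hβ).comp (fun a b hab => by simpa using hab : Monotone
      (fun u : ℝ => u + (y - x)))).intervalIntegrable)
    (fun u _ => hfun_mono hβ (by linarith))

end Stmt9Aux

open Stmt9Aux

/-- Proposition 3.9: for any `KL` function `β` (wlog positive for `s > 0`)
there is a family `T_r(ε)`, strictly decreasing and onto `(0,∞)` in `ε`, strictly
increasing and unbounded in `r`, jointly continuous, with `β(s,t) ≤ ε` for `s ≤ r`,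
`t ≥ T_r(ε)`. -/
theorem stmt9 (β : ℝ → ℝ → ℝ) (hβ : ClassKL β)
    (hβpos : ∀ s t, 0 < s → 0 ≤ t → 0 < β s t) :
    ∃ T : ℝ → ℝ → ℝ,
      (∀ r, 0 < r → (∀ ε, 0 < ε → 0 < T r ε) ∧ StrictAntiOn (T r) (Set.Ioi 0) ∧
        ∀ c, 0 < c → ∃ ε, 0 < ε ∧ T r ε = c) ∧
      (∀ ε, 0 < ε → StrictMonoOn (fun r => T r ε) (Set.Ioi 0) ∧
        Filter.Tendsto (fun r => T r ε) Filter.atTop Filter.atTop) ∧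
      ContinuousOn (fun p : ℝ × ℝ => T p.1 p.2) (Set.Ioi 0 ×ˢ Set.Ioi 0) ∧
      ∀ s t r ε, 0 ≤ s → s ≤ r → 0 < ε → T r ε ≤ t → β s t ≤ ε := by
  classical
  set T : ℝ → ℝ → ℝ := fun r ε => (1 + r + Kfun β (r + ε⁻¹)) / ε with hTdef
  have hK0 : ∀ x, 0 ≤ Kfun β x := Kfun_nonneg hβ
  have hKmono := Kfun_mono hβ
  have hKcont := Kfun_continuous hβ
  -- positivity of T
  have hTpos : ∀ r ε, 0 ≤ r → 0 < ε → 0 < T r ε := by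
    intro r ε hr hε
    have := hK0 (r + ε⁻¹)
    have hnum : 0 < 1 + r + Kfun β (r + ε⁻¹) := by linarith
    exact div_pos hnum hε
  -- joint continuity
  have hjoint : ContinuousOn (fun p : ℝ × ℝ => T p.1 p.2)
      (Set.Ioi 0 ×ˢ Set.Ioi 0) := by
    apply ContinuousOn.div
    · apply ContinuousOn.add
      · exact (continuous_const.add continuous_fst).continuousOn
      · apply hKcont.comp_continuousOn
        apply ContinuousOn.add continuous_fst.continuousOn
        apply ContinuousOn.inv₀ continuous_snd.continuousOn
        intro p hp
        exact ne_of_gt hp.2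
    · exact continuous_snd.continuousOn
    · intro p hp
      exact ne_of_gt hp.2
  refine ⟨T, ?_, ?_, hjoint, ?_⟩
  · -- fixed r
    intro r hr
    refine ⟨fun ε hε => hTpos r ε hr.le hε, ?_, ?_⟩
    · -- strictly decreasing in ε
      intro ε₁ hε₁ ε₂ hε₂ h12
      simp only [Set.mem_Ioi] at hε₁ hε₂
      show T r ε₂ < T r ε₁
      have hinv : ε₂⁻¹ ≤ ε₁⁻¹ := by gcongr
      have hN : Kfun β (r + ε₂⁻¹) ≤ Kfun β (r + ε₁⁻¹) := hKmono (by linarith)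
      have h0 : 0 < 1 + r + Kfun β (r + ε₂⁻¹) := by
        have := hK0 (r + ε₂⁻¹); linarith
      rw [hTdef]
      simp only
      rw [div_lt_div_iff₀ hε₂ hε₁]
      nlinarith
    · -- surjectivity onto (0, ∞)
      intro c hc
      set B : ℝ := 1 + r + Kfun β (r + 1) with hB
      have hBpos : 0 < B := by have := hK0 (r + 1); rw [hB]; linarith
      set b : ℝ := max 1 (B / c) with hb
      have hb1 : (1:ℝ) ≤ b := le_max_left _ _
      have hbpos : (0:ℝ) < b := lt_of_lt_of_le zero_lt_one hb1
      set a : ℝ := min c⁻¹ b with ha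
      have hapos : 0 < a := lt_min (by positivity) hbpos
      have hab : a ≤ b := min_le_right _ _
      have hfb : T r b ≤ c := by
        have hbinv : b⁻¹ ≤ 1 := by
          have h1 : b⁻¹ ≤ 1⁻¹ := by gcongr
          simpa using h1
        have hKb : Kfun β (r + b⁻¹) ≤ Kfun β (r + 1) := hKmono (by linarith)
        have hnum : 1 + r + Kfun β (r + b⁻¹) ≤ B := by rw [hB]; linarith
        have h2 : B ≤ b * c := by
          have h3 : B / c ≤ b := le_max_right _ _
          rwa [div_le_iff₀ hc] at h3
        simp only [hTdef]
        rw [div_le_iff₀ hbpos]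
        nlinarith
      have hfa : c ≤ T r a := by
        have hnum : 1 ≤ 1 + r + Kfun β (r + a⁻¹) := by
          have := hK0 (r + a⁻¹); linarith
        have hca : c * a ≤ 1 := by
          have hcle : c ≤ a⁻¹ := by
            have h1 : a ≤ c⁻¹ := min_le_left _ _
            have h2 : (c⁻¹)⁻¹ ≤ a⁻¹ := by gcongr
            rwa [inv_inv] at h2
          have := mul_le_mul_of_nonneg_right hcle hapos.le
          rwa [inv_mul_cancel₀ (ne_of_gt hapos)] at this
        simp only [hTdef]
        rw [le_div_iff₀ hapos]
        linarith
      have hsub : Set.Icc a b ⊆ Set.Ioi 0 := fun z hz => lt_of_lt_of_le hapos hz.1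
      have hcontT : ContinuousOn (T r) (Set.Icc a b) := by
        have h1 : ContinuousOn (fun ε : ℝ => T r ε) (Set.Ioi 0) := by
          apply hjoint.comp ((continuous_const.prodMk continuous_id).continuousOn)
          intro z hz
          exact ⟨hr, hz⟩
        exact h1.mono hsub
      obtain ⟨ε, hεmem, hεeq⟩ := intermediate_value_Icc' hab hcontT ⟨hfb, hfa⟩
      exact ⟨ε, lt_of_lt_of_le hapos hεmem.1, hεeq⟩
  · -- fixed ε
    intro ε hε
    constructor
    · intro r₁ h1 r₂ h2 h12
      simp only [Set.mem_Ioi] at h1 h2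
      show T r₁ ε < T r₂ ε
      have hKle : Kfun β (r₁ + ε⁻¹) ≤ Kfun β (r₂ + ε⁻¹) := hKmono (by linarith)
      simp only [hTdef]
      rw [div_lt_div_iff₀ hε hε]
      nlinarith
    · apply tendsto_atTop_mono ?_ (tendsto_id.atTop_div_const hε)
      intro r
      simp only [hTdef, id]
      gcongr
      have := hK0 (r + ε⁻¹)
      linarith
  · -- the KL bound
    intro s t r ε hs hsr hε hT
    have hr : 0 ≤ r := hs.trans hsr
    have hεi : 0 < ε⁻¹ := by positivity
    have ht0 : 0 ≤ t := le_trans (hTpos r ε hr hε).le hT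
    simp only [hTdef] at hT
    set x : ℝ := r + ε⁻¹ with hxdef
    have hxR : x ≤ max x 1 := le_max_left _ _
    have hR0 : (0:ℝ) ≤ max x 1 := le_trans zero_le_one (le_max_right _ _)
    have hsR : s ≤ max x 1 := by
      have : s ≤ x := by rw [hxdef]; linarith
      linarith
    have hfirst : β s t ≤ β (max x 1) t :=
      (hβ.1 t ht0).2.1.monotoneOn hs hR0 hsR
    rcases le_or_gt (β (max x 1) 0) ε with hcase | hcase
    · have h1 : β s t ≤ β s 0 :=
        (hβ.2 s hs).2.1 (Set.self_mem_Ici) ht0 ht0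
      have h2 : β s 0 ≤ β (max x 1) 0 :=
        (hβ.1 0 le_rfl).2.1.monotoneOn hs hR0 hsR
      linarith
    · obtain ⟨hg0, hgβ⟩ := gfun_mem hβ x
      have hT2 : gfun β x ≤ (1 + r + Kfun β x) / ε := by
        have hhx : gfun β x * ε ≤ hfun β x := by
          unfold hfun
          exact mul_le_mul_of_nonneg_left (by linarith) hg0
        have hKx := Kfun_ge hβ x
        rw [le_div_iff₀ hε]
        linarith
      have hgt : gfun β x ≤ t := hT2.trans hT
      have h3 : β (max x 1) t ≤ β (max x 1) (gfun β x) :=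
        (hβ.2 (max x 1) hR0).2.1 hg0 ht0 hgt
      have hRinv : (max x 1)⁻¹ ≤ ε := by
        have h4 : ε⁻¹ ≤ max x 1 := le_trans (by rw [hxdef]; linarith) hxR
        have h5 : (max x 1)⁻¹ ≤ (ε⁻¹)⁻¹ := by gcongr
        rwa [inv_inv] at h5
      linarith
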